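/- With the notation of the de Jonquières parametrization (g_0 f : ... : g_n f : g) whose implicit equation is F = (g(g') − y_{n+1} f(g')·D)/gcd(g(g'), f(g')·D): one has deg(F) = deg(g)·d' − deg(gcd(g(g'), f(g')·D)), where d' is the degree of the inverse Cremona map. In particular deg(F) ≤ deg(g)·d'. -/

import Mathlib

open MvPolynomial

section Aux

variable {σ k : Type*} [Field k]

/-- The substitution `Xᵢ ↦ Xᵢ·T` sending a multivariate polynomial to a univariate
polynomial whose `j`-th coefficient is the `j`-th homogeneous component. -/
noncomputable def auxPhi : MvPolynomial σ k →ₐ[k] Polynomial (MvPolynomial σ k) :=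
  MvPolynomial.aeval (fun i => Polynomial.C (MvPolynomial.X i) * Polynomial.X)

lemma auxPhi_monomial (d : σ →₀ ℕ) (a : k) :
    auxPhi (monomial d a) =
      Polynomial.C (monomial d a) * Polynomial.X ^ (d.sum fun _ e => e) := by
  classical
  rw [auxPhi, aeval_monomial]
  have h1 : (d.prod fun i e => (Polynomial.C (MvPolynomial.X i : MvPolynomial σ k)
      * Polynomial.X) ^ e)
      = Polynomial.C (d.prod fun i e => (MvPolynomial.X i : MvPolynomial σ k) ^ e)
        * Polynomial.X ^ (d.sum fun _ e => e) := by
    rw [Finsupp.prod, Finsupp.prod, Finsupp.sum, map_prod, ← Finset.prod_pow_eq_pow_sum,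
      ← Finset.prod_mul_distrib]
    refine Finset.prod_congr rfl fun i _ => ?_
    rw [mul_pow, Polynomial.C_pow]
  rw [h1, monomial_eq, map_mul, Polynomial.algebraMap_apply, MvPolynomial.algebraMap_eq,
    ← mul_assoc]

lemma coeff_auxPhi (p : MvPolynomial σ k) (j : ℕ) :
    (auxPhi p).coeff j = homogeneousComponent j p := by
  classical
  conv_lhs => rw [← p.support_sum_monomial_coeff]
  rw [map_sum, Polynomial.finset_sum_coeff, homogeneousComponent_apply]
  rw [Finset.sum_filter]
  refine Finset.sum_congr rfl fun d _ => ?_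
  rw [auxPhi_monomial, Polynomial.coeff_C_mul, Polynomial.coeff_X_pow]
  have : d.degree = d.sum fun _ e => e := by
    simp [Finsupp.degree, Finsupp.sum]
    rfl
  rw [this]
  by_cases h : j = d.sum fun _ e => e
  · simp [h]
  · simp [h, Ne.symm h]

lemma homogeneousComponent_totalDegree_ne_zero {p : MvPolynomial σ k} (hp : p ≠ 0) :
    homogeneousComponent p.totalDegree p ≠ 0 := by
  classical
  obtain ⟨d, hd, hsup⟩ := Finset.exists_mem_eq_sup p.support
    (support_nonempty.mpr hp) (fun s => s.sum fun _ e => e)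
  intro h
  have hdeg : d.degree = p.totalDegree := by
    unfold MvPolynomial.totalDegree
    rw [hsup]
    rfl
  have := coeff_homogeneousComponent (φ := p) (n := p.totalDegree) d
  rw [h, hdeg] at this
  simp only [coeff_zero, if_pos rfl] at this
  exact (mem_support_iff.mp hd) this.symm

lemma auxPhi_ne_zero {p : MvPolynomial σ k} (hp : p ≠ 0) : auxPhi p ≠ 0 := fun h => by
  have := coeff_auxPhi p p.totalDegree
  rw [h, Polynomial.coeff_zero] at this
  exact homogeneousComponent_totalDegree_ne_zero hp this.symm

lemma natDegree_auxPhi {p : MvPolynomial σ k} (hp : p ≠ 0) :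
    (auxPhi p).natDegree = p.totalDegree := by
  refine le_antisymm (Polynomial.natDegree_le_iff_coeff_eq_zero.mpr fun m hm => ?_)
    (Polynomial.le_natDegree_of_ne_zero ?_)
  · rw [coeff_auxPhi]
    exact homogeneousComponent_eq_zero _ _ hm
  · rw [coeff_auxPhi]
    exact homogeneousComponent_totalDegree_ne_zero hp

/-- Total degree is additive on products over a field. -/
lemma totalDegree_mul_eq {p q : MvPolynomial σ k} (hp : p ≠ 0) (hq : q ≠ 0) :
    (p * q).totalDegree = p.totalDegree + q.totalDegree := by
  have h := Polynomial.natDegree_mul (auxPhi_ne_zero hp) (auxPhi_ne_zero hq)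
  rw [← map_mul] at h
  rw [← natDegree_auxPhi (mul_ne_zero hp hq), h, natDegree_auxPhi hp, natDegree_auxPhi hq]

lemma totalDegree_rename_injective {τ : Type*} (f : σ → τ) (hf : Function.Injective f)
    (p : MvPolynomial σ k) : (rename f p).totalDegree = p.totalDegree := by
  classical
  refine le_antisymm (totalDegree_rename_le f p) ?_
  rcases eq_or_ne p 0 with rfl | hp
  · simp
  obtain ⟨d, hd, hsup⟩ := Finset.exists_mem_eq_sup p.support
    (support_nonempty.mpr hp) (fun s => s.sum fun _ e => e)
  have hmem : Finsupp.mapDomain f d ∈ (rename f p).support := by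
    rw [mem_support_iff, coeff_rename_mapDomain f hf]
    exact mem_support_iff.mp hd
  have h2 := le_totalDegree hmem
  rwa [Finsupp.sum_mapDomain_index (fun _ => rfl) (fun _ _ _ => rfl), ← hsup,
    ← totalDegree] at h2

end Aux

/-- Degree of the implicit equation of a de Jonquières parametrization
`(g₀f : … : gₙf : g)`: with `A = g(g')`, `Bp = f(g')·D`, `c = gcd(A, Bp)` and
cofactors `A = c·G₁`, `Bp = c·H₁`, the implicit equation is the monoid
`F = G₁ − y_{n+1}·H₁` and `deg F = deg(g)·d' − deg c`; in particular
`deg F ≤ deg(g)·d'`. -/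
theorem stmt11 {k : Type*} [Field k] {n d d' df : ℕ}
    (gv g' : Fin (n + 1) → MvPolynomial (Fin (n + 1)) k)
    (D f gp c G₁ H₁ : MvPolynomial (Fin (n + 1)) k)
    (hd : 1 ≤ d) (hd' : 1 ≤ d')
    (hgv : ∀ i, (gv i).IsHomogeneous d)
    (hg' : ∀ i, (g' i).IsHomogeneous d')
    (hf : f.IsHomogeneous df) (hgp : gp.IsHomogeneous (d + df))
    (hD : D ≠ 0)
    (hinv : ∀ i, MvPolynomial.aeval g' (gv i) = MvPolynomial.X i * D)
    (hA0 : MvPolynomial.aeval g' gp ≠ 0) (hB0 : MvPolynomial.aeval g' f ≠ 0)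
    (hcgcd : c ∣ MvPolynomial.aeval g' gp ∧ c ∣ MvPolynomial.aeval g' f * D ∧
      ∀ e, e ∣ MvPolynomial.aeval g' gp → e ∣ MvPolynomial.aeval g' f * D → e ∣ c)
    (hG₁ : MvPolynomial.aeval g' gp = c * G₁)
    (hH₁ : MvPolynomial.aeval g' f * D = c * H₁) :
    (rename Fin.castSucc G₁
        - X (Fin.last (n + 1)) * rename Fin.castSucc H₁ :
        MvPolynomial (Fin (n + 2)) k).totalDegree
      = (d + df) * d' - c.totalDegree ∧
    (rename Fin.castSucc G₁
        - X (Fin.last (n + 1)) * rename Fin.castSucc H₁ :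
        MvPolynomial (Fin (n + 2)) k).totalDegree ≤ (d + df) * d' := by
  classical
  -- nonvanishing of the various factors
  have hc0 : c ≠ 0 := left_ne_zero_of_mul (hG₁ ▸ hA0)
  have hG10 : G₁ ≠ 0 := right_ne_zero_of_mul (hG₁ ▸ hA0)
  have hBD0 : MvPolynomial.aeval g' f * D ≠ 0 := mul_ne_zero hB0 hD
  have hH10 : H₁ ≠ 0 := right_ne_zero_of_mul (hH₁ ▸ hBD0)
  -- degrees of the compositions
  have hA : (MvPolynomial.aeval g' gp).totalDegree = d' * (d + df) :=
    (hgp.aeval g' hg').totalDegree hA0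
  have hB : (MvPolynomial.aeval g' f).totalDegree = d' * df :=
    (hf.aeval g' hg').totalDegree hB0
  -- degree of the inversion factor D
  have hXD : (MvPolynomial.X (0 : Fin (n + 1)) * D).totalDegree = d' * d := by
    rw [← hinv 0]
    exact ((hgv 0).aeval g' hg').totalDegree (by rw [hinv 0]; exact mul_ne_zero (X_ne_zero _) hD)
  have hDdeg : 1 + D.totalDegree = d' * d := by
    rw [← hXD, totalDegree_mul_eq (X_ne_zero _) hD, totalDegree_X]
  -- degree equations for the cofactors
  have eq1 : c.totalDegree + G₁.totalDegree = d' * (d + df) := by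
    rw [← totalDegree_mul_eq hc0 hG10, ← hG₁, hA]
  have eq2 : c.totalDegree + H₁.totalDegree = d' * df + D.totalDegree := by
    rw [← totalDegree_mul_eq hc0 hH10, ← hH₁, totalDegree_mul_eq hB0 hD, hB]
  have hmuladd : d' * (d + df) = d' * d + d' * df := by ring
  -- set abbreviations
  set P : MvPolynomial (Fin (n + 2)) k := rename Fin.castSucc G₁ with hP
  set Q : MvPolynomial (Fin (n + 2)) k := X (Fin.last (n + 1)) * rename Fin.castSucc H₁ with hQ
  have hrenG : P.totalDegree = G₁.totalDegree :=
    totalDegree_rename_injective _ (Fin.castSucc_injective _) G₁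
  have hrenH0 : (rename (Fin.castSucc (n := n + 1)) H₁) ≠ 0 := fun h =>
    hH10 ((map_eq_zero_iff _ (rename_injective _ (Fin.castSucc_injective _))).mp h)
  have hQdeg : Q.totalDegree = 1 + H₁.totalDegree := by
    rw [hQ, totalDegree_mul_eq (X_ne_zero _) hrenH0, totalDegree_X,
      totalDegree_rename_injective _ (Fin.castSucc_injective _)]
  have key : 1 + H₁.totalDegree = G₁.totalDegree := by omega
  -- upper bound for the difference
  have hub : (P - Q).totalDegree ≤ G₁.totalDegree := by
    refine (totalDegree_sub P Q).trans ?_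
    rw [hrenG, hQdeg, key]
    exact max_le le_rfl le_rfl
  -- lower bound: a top monomial of G₁ survives in the difference
  have hlb : G₁.totalDegree ≤ (P - Q).totalDegree := by
    obtain ⟨e, he, hsup⟩ := Finset.exists_mem_eq_sup G₁.support
      (support_nonempty.mpr hG10) (fun s => s.sum fun _ e => e)
    set m : Fin (n + 2) →₀ ℕ := Finsupp.mapDomain Fin.castSucc e with hm
    have hmP : coeff m P = coeff e G₁ :=
      coeff_rename_mapDomain _ (Fin.castSucc_injective _) G₁ e
    have hmlast : Fin.last (n + 1) ∉ m.support := by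
      simp only [Finsupp.mem_support_iff, hm, ne_eq, not_not]
      exact Finsupp.mapDomain_notin_range _ _ (by
        rintro ⟨i, hi⟩
        exact absurd hi (Fin.castSucc_lt_last i).ne)
    have hmQ : coeff m Q = 0 := by
      rw [hQ, coeff_X_mul', if_neg hmlast]
    have hmem : m ∈ (P - Q).support := by
      rw [mem_support_iff, coeff_sub, hmP, hmQ, sub_zero]
      exact mem_support_iff.mp he
    have h2 := le_totalDegree hmem
    rwa [hm, Finsupp.sum_mapDomain_index (fun _ => rfl) (fun _ _ _ => rfl), ← hsup,
      ← totalDegree] at h2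
  have hPQ : (P - Q).totalDegree = G₁.totalDegree := le_antisymm hub hlb
  constructor
  · rw [hPQ]
    have : (d + df) * d' = d' * (d + df) := by ring
    omega
  · rw [hPQ]
    have : (d + df) * d' = d' * (d + df) := by ring
    omega
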